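/- Let P_n be defined by P_0(x)=1, P_1(x)=x and P_{n+1}(x) = x P_n(x) - (1/4)(x^2+1) P_{n-1}(x) for n ≥ 1. Then for each n ≥ 1, the n real numbers x_{n,k} = cot(kπ/(n+1)), k = 1, ..., n, are exactly the zeros of P_n. -/

import Mathlib

open Real

lemma cot_key (P : ℕ → ℝ → ℝ)
    (h0 : ∀ x, P 0 x = 1) (h1 : ∀ x, P 1 x = x)
    (hrec : ∀ n x, P (n+2) x = x * P (n+1) x - (1/4) * (x^2+1) * P n x) :
    ∀ (n : ℕ) (θ : ℝ), Real.sin θ ≠ 0 →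
      2^n * Real.sin θ^(n+1) * P n (Real.cot θ) = Real.sin (((n:ℝ)+1)*θ) := by
  intro n
  induction n using Nat.twoStepInduction with
  | zero =>
    intro θ h
    simp [h0]
  | one =>
    intro θ h
    rw [h1]
    push_cast
    have e : ((1:ℝ)+1)*θ = 2*θ := by ring
    rw [e, Real.sin_two_mul, Real.cot_eq_cos_div_sin]
    field_simp
  | more m ih1 ih2 =>
    intro θ h
    have A : Real.sin (((m:ℝ)+1)*θ) = 2^m * Real.sin θ^(m+1) * P m (Real.cot θ) :=
      (ih1 θ h).symm
    have B : Real.sin (((m:ℝ)+1+1)*θ) = 2^(m+1) * Real.sin θ^(m+2) * P (m+1) (Real.cot θ) := by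
      have := ih2 θ h
      push_cast at this
      exact this.symm
    have key : Real.sin ((((m:ℕ):ℝ)+2+1)*θ)
        = 2 * Real.cos θ * Real.sin (((m:ℝ)+1+1)*θ) - Real.sin (((m:ℝ)+1)*θ) := by
      have e1 : (((m:ℕ):ℝ)+2+1)*θ = ((m:ℝ)+1+1)*θ + θ := by ring
      have e2 : ((m:ℝ)+1)*θ = ((m:ℝ)+1+1)*θ - θ := by ring
      rw [e1, e2, Real.sin_add, Real.sin_sub]; ring
    have hc2 : Real.cot θ^2 + 1 = 1 / Real.sin θ^2 := by
      rw [Real.cot_eq_cos_div_sin]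
      field_simp
      exact Real.cos_sq_add_sin_sq θ
    push_cast
    rw [key, A, B, hrec, Real.cot_eq_cos_div_sin]
    have hc2' : (Real.cos θ / Real.sin θ)^2 + 1 = 1 / Real.sin θ^2 := by
      rw [← Real.cot_eq_cos_div_sin]; exact hc2
    rw [hc2']
    field_simp
    ring

lemma cot_inj {a b : ℝ} (ha0 : 0 < a) (haπ : a < π) (hb0 : 0 < b) (hbπ : b < π)
    (h : Real.cot a = Real.cot b) : a = b := by
  have hsa := Real.sin_pos_of_pos_of_lt_pi ha0 haπ
  have hsb := Real.sin_pos_of_pos_of_lt_pi hb0 hbπ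
  rw [Real.cot_eq_cos_div_sin, Real.cot_eq_cos_div_sin, div_eq_div_iff hsa.ne' hsb.ne'] at h
  have hs : Real.sin (b - a) = 0 := by
    rw [Real.sin_sub]; linarith
  obtain ⟨m, hm⟩ := Real.sin_eq_zero_iff.mp hs
  have hπ := Real.pi_pos
  have hm0 : m = 0 := by
    by_contra hm0
    rcases lt_or_gt_of_ne hm0 with hlt | hgt
    · have : (m:ℝ) ≤ -1 := by exact_mod_cast (by omega : m ≤ -1)
      nlinarith
    · have : (1:ℝ) ≤ (m:ℝ) := by exact_mod_cast hgt
      nlinarith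
  rw [hm0] at hm
  simp at hm
  linarith

lemma cot_surj (x : ℝ) : ∃ θ : ℝ, 0 < θ ∧ θ < π ∧ Real.cot θ = x := by
  refine ⟨π/2 - Real.arctan x, ?_, ?_, ?_⟩
  · linarith [Real.arctan_lt_pi_div_two x]
  · linarith [Real.neg_pi_div_two_lt_arctan x, Real.pi_pos]
  · rw [Real.cot_eq_cos_div_sin, Real.cos_pi_div_two_sub, Real.sin_pi_div_two_sub,
      ← Real.tan_eq_sin_div_cos, Real.tan_arctan]

theorem stmt2 (P : ℕ → ℝ → ℝ)
    (h0 : ∀ x, P 0 x = 1) (h1 : ∀ x, P 1 x = x)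
    (hrec : ∀ n x, P (n+2) x = x * P (n+1) x - (1/4) * (x^2+1) * P n x)
    (n : ℕ) (hn : 1 ≤ n) :
    (∀ x : ℝ, P n x = 0 ↔
        ∃ k : ℕ, 1 ≤ k ∧ k ≤ n ∧ x = Real.cot (k * Real.pi / (n+1)))
    ∧ ∀ k l : ℕ, 1 ≤ k → k ≤ n → 1 ≤ l → l ≤ n → k ≠ l →
        Real.cot (k * Real.pi / (n+1)) ≠ Real.cot (l * Real.pi / (n+1)) := by
  have hπ := Real.pi_pos
  have hn1 : (0:ℝ) < (n:ℝ) + 1 := by positivity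
  -- the arguments kπ/(n+1) are in (0,π)
  have harg : ∀ k : ℕ, 1 ≤ k → k ≤ n → 0 < (k:ℝ) * π / ((n:ℝ)+1) ∧ (k:ℝ) * π / ((n:ℝ)+1) < π := by
    intro k hk1 hkn
    have hk1' : (1:ℝ) ≤ (k:ℝ) := by exact_mod_cast hk1
    have hkn' : (k:ℝ) ≤ (n:ℝ) := by exact_mod_cast hkn
    constructor
    · positivity
    · rw [div_lt_iff₀ hn1]; nlinarith
  constructor
  · intro x
    constructor
    · intro hx
      obtain ⟨θ, hθ0, hθπ, hcot⟩ := cot_surj x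
      have hs := Real.sin_pos_of_pos_of_lt_pi hθ0 hθπ
      have hkey := cot_key P h0 h1 hrec n θ hs.ne'
      rw [hcot, hx, mul_zero] at hkey
      obtain ⟨m, hm⟩ := Real.sin_eq_zero_iff.mp hkey.symm
      have hm0 : 0 < m := by
        by_contra hle
        push_neg at hle
        have : (m:ℝ) ≤ 0 := by exact_mod_cast hle
        nlinarith
      have hmn : m < (n:ℤ) + 1 := by
        by_contra hle
        push_neg at hle
        have : ((n:ℝ)+1) ≤ (m:ℝ) := by exact_mod_cast hle
        nlinarith
      refine ⟨m.toNat, by omega, by omega, ?_⟩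
      have hmt : ((m.toNat : ℕ) : ℝ) = (m:ℝ) := by
        norm_cast
        omega
      have hθeq : ((m.toNat : ℕ) : ℝ) * π / ((n:ℝ)+1) = θ := by
        rw [hmt]
        field_simp
        linarith [hm]
      rw [hθeq, hcot]
    · rintro ⟨k, hk1, hkn, rfl⟩
      obtain ⟨hpos, hlt⟩ := harg k hk1 hkn
      have hs := Real.sin_pos_of_pos_of_lt_pi hpos hlt
      have hkey := cot_key P h0 h1 hrec n ((k:ℝ) * π / ((n:ℝ)+1)) hs.ne'
      have harg2 : ((n:ℝ)+1) * ((k:ℝ) * π / ((n:ℝ)+1)) = (k:ℝ) * π := by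
        field_simp
      rw [harg2, Real.sin_nat_mul_pi] at hkey
      have h2 : (0:ℝ) < 2^n * Real.sin ((k:ℝ) * π / ((n:ℝ)+1))^(n+1) := by positivity
      have := mul_eq_zero.mp hkey
      rcases this with h | h
      · exact absurd h h2.ne'
      · exact h
  · intro k l hk1 hkn hl1 hln hkl hEq
    obtain ⟨hk0, hkπ⟩ := harg k hk1 hkn
    obtain ⟨hl0, hlπ⟩ := harg l hl1 hln
    have := cot_inj hk0 hkπ hl0 hlπ hEq
    field_simp at this
    have h' : (k:ℝ) = (l:ℝ) := by linarith
    exact hkl (by exact_mod_cast h')
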